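/- Let f : [0,∞) → [0,∞) be a decreasing (not necessarily strictly) function and X a Borel subset of ℝ. Suppose there exist q ∈ [0,1] and δ > 0 such that ℓ([0,r] ∩ X) ≥ r·q for all 0 < r ≤ δ. Then ∫_{X ∩ [0,δ]} f(x) dx ≥ q · ∫_{[0,δ]} f(x) dx. -/
import Mathlib

open MeasureTheory

lemma key_pointwise (g : ℝ → ℝ) (hg : Antitone g)
    (X : Set ℝ) (q δ : ℝ) (hq : q ∈ Set.Icc (0 : ℝ) 1) (hδ : 0 < δ)
    (h : ∀ r : ℝ, 0 < r → r ≤ δ → r * q ≤ (volume (Set.Icc 0 r ∩ X)).toReal)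
    (t : ℝ) :
    ENNReal.ofReal q * volume ({a | t < g a} ∩ Set.Icc 0 δ) ≤
      volume ({a | t < g a} ∩ (X ∩ Set.Icc 0 δ)) := by
  set S : Set ℝ := {a | t < g a} ∩ Set.Icc 0 δ with hS
  rcases S.eq_empty_or_nonempty with hSe | hSne
  · simp [hS] at hSe ⊢
    rw [hSe]
    simp
  · have hbdd : BddAbove S := ⟨δ, fun x hx => hx.2.2⟩
    set s : ℝ := sSup S with hs
    have hsδ : s ≤ δ := csSup_le hSne (fun x hx => hx.2.2)
    have hs0 : 0 ≤ s := by
      obtain ⟨y, hy⟩ := hSne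
      have h0S : (0 : ℝ) ∈ S := by
        refine ⟨lt_of_lt_of_le hy.1 (hg hy.2.1), le_refl 0, le_of_lt hδ⟩
      exact le_csSup hbdd h0S
    have hIco : Set.Ico 0 s ⊆ S := by
      intro x hx
      obtain ⟨y, hyS, hxy⟩ := exists_lt_of_lt_csSup hSne hx.2
      exact ⟨lt_of_lt_of_le hyS.1 (hg hxy.le), hx.1, hxy.le.trans hyS.2.2⟩
    have hIcc : S ⊆ Set.Icc 0 s := fun x hx => ⟨hx.2.1, le_csSup hbdd hx⟩
    have hvol : volume S = ENNReal.ofReal s := by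
      apply le_antisymm
      · calc volume S ≤ volume (Set.Icc 0 s) := measure_mono hIcc
          _ = ENNReal.ofReal s := by rw [Real.volume_Icc]; ring_nf
      · calc ENNReal.ofReal s = volume (Set.Ico 0 s) := by rw [Real.volume_Ico]; ring_nf
          _ ≤ volume S := measure_mono hIco
    have hfin : volume (S ∩ X) ≠ ⊤ := by
      refine ne_top_of_le_ne_top ?_ (measure_mono Set.inter_subset_left)
      rw [hvol]; exact ENNReal.ofReal_ne_top
    have hreal : q * s ≤ (volume (S ∩ X)).toReal := by
      apply le_of_forall_pos_le_add
      intro ε hε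
      rcases le_or_gt s ε with hsε | hεs
      · have : q * s ≤ ε := by nlinarith [hq.1, hq.2]
        have : (0:ℝ) ≤ (volume (S ∩ X)).toReal := ENNReal.toReal_nonneg
        linarith
      · have hr : 0 < s - ε := by linarith
        have hrδ : s - ε ≤ δ := by linarith
        have h1 := h (s - ε) hr hrδ
        have hsub : Set.Icc 0 (s - ε) ∩ X ⊆ S ∩ X := by
          apply Set.inter_subset_inter_left
          intro x hx
          exact hIco ⟨hx.1, lt_of_le_of_lt hx.2 (by linarith)⟩
        have h2 : (volume (Set.Icc 0 (s - ε) ∩ X)).toReal ≤ (volume (S ∩ X)).toReal :=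
          ENNReal.toReal_mono hfin (measure_mono hsub)
        nlinarith [hq.1, hq.2]
    have : ENNReal.ofReal (q * s) ≤ volume (S ∩ X) := by
      rw [← ENNReal.ofReal_toReal hfin]
      exact ENNReal.ofReal_le_ofReal hreal
    calc ENNReal.ofReal q * volume S = ENNReal.ofReal (q * s) := by
          rw [hvol, ← ENNReal.ofReal_mul hq.1]
      _ ≤ volume (S ∩ X) := this
      _ = volume ({a | t < g a} ∩ (X ∩ Set.Icc 0 δ)) := by
          rw [hS]; congr 1; ext x
          simp [Set.mem_inter_iff]; tauto

theorem stmt1 (f : ℝ → ℝ) (hf0 : ∀ x, 0 ≤ x → 0 ≤ f x)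
    (hmono : ∀ x y, 0 ≤ x → x ≤ y → f y ≤ f x)
    (X : Set ℝ) (hX : MeasurableSet X) (q δ : ℝ) (hq : q ∈ Set.Icc (0 : ℝ) 1) (hδ : 0 < δ)
    (h : ∀ r : ℝ, 0 < r → r ≤ δ → r * q ≤ (volume (Set.Icc 0 r ∩ X)).toReal) :
    q * ∫ x in Set.Icc 0 δ, f x ≤ ∫ x in X ∩ Set.Icc 0 δ, f x := by
  set g : ℝ → ℝ := fun x => f (max x 0) with hgdef
  have hg : Antitone g := fun x y hxy =>
    hmono _ _ (le_max_right x 0) (max_le_max hxy le_rfl)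
  have hg0 : ∀ x, 0 ≤ g x := fun x => hf0 _ (le_max_right x 0)
  have hgm : Measurable g := hg.measurable
  have hB : MeasurableSet (Set.Icc (0:ℝ) δ) := measurableSet_Icc
  have hA : MeasurableSet (X ∩ Set.Icc (0:ℝ) δ) := hX.inter hB
  have heqB : Set.EqOn f g (Set.Icc 0 δ) := fun x hx => by
    simp [hgdef, max_eq_left hx.1]
  have heqA : Set.EqOn f g (X ∩ Set.Icc 0 δ) := fun x hx => heqB hx.2
  rw [setIntegral_congr_fun hB heqB, setIntegral_congr_fun hA heqA]
  -- lintegral inequality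
  have hnnB : 0 ≤ᵐ[volume.restrict (Set.Icc (0:ℝ) δ)] g :=
    Filter.Eventually.of_forall hg0
  have hnnA : 0 ≤ᵐ[volume.restrict (X ∩ Set.Icc (0:ℝ) δ)] g :=
    Filter.Eventually.of_forall hg0
  have hlcB := lintegral_eq_lintegral_meas_lt (volume.restrict (Set.Icc (0:ℝ) δ))
    hnnB hgm.aemeasurable
  have hlcA := lintegral_eq_lintegral_meas_lt (volume.restrict (X ∩ Set.Icc (0:ℝ) δ))
    hnnA hgm.aemeasurable
  have key : ENNReal.ofReal q * ∫⁻ x in Set.Icc 0 δ, ENNReal.ofReal (g x) ≤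
      ∫⁻ x in X ∩ Set.Icc 0 δ, ENNReal.ofReal (g x) := by
    rw [hlcB, hlcA, ← lintegral_const_mul' _ _ ENNReal.ofReal_ne_top]
    apply lintegral_mono
    intro t
    have hm : MeasurableSet {a | t < g a} := measurableSet_lt measurable_const hgm
    beta_reduce
    rw [Measure.restrict_apply hm, Measure.restrict_apply hm]
    exact key_pointwise g hg X q δ hq hδ h t
  by_cases hint : IntegrableOn g (Set.Icc 0 δ) volume
  · have hBfin : ∫⁻ x in Set.Icc 0 δ, ENNReal.ofReal (g x) < ⊤ := by
      have := hint.2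
      rwa [hasFiniteIntegral_iff_ofReal hnnB] at this
    have hle : ∫⁻ x in X ∩ Set.Icc 0 δ, ENNReal.ofReal (g x) ≤
        ∫⁻ x in Set.Icc 0 δ, ENNReal.ofReal (g x) :=
      lintegral_mono_set Set.inter_subset_right
    have hAfin := lt_of_le_of_lt hle hBfin
    rw [integral_eq_lintegral_of_nonneg_ae hnnB hgm.aestronglyMeasurable,
      integral_eq_lintegral_of_nonneg_ae hnnA hgm.aestronglyMeasurable]
    rw [← ENNReal.toReal_ofReal hq.1, ← ENNReal.toReal_mul]
    exact ENNReal.toReal_mono hAfin.ne key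
  · rw [integral_undef hint, mul_zero]
    exact integral_nonneg hg0
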